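/- The matrices A(i,m) = (1/(2^m m!)) Σ_{j=0}^m (−1)^{m−j} (2j+1)^i C(m,j) (for i ≥ m ≥ 0) and P(m,i) defined by Σ_i P(m,i) z^i = ∏_{k=0}^{m−1}(z−(2k+1)) are inverse to each other in the following sense: for all n ≥ m ≥ 0, Σ_{i=m}^{n} P(n,i) A(i,m) = δ_{n,m}. -/
import Mathlib


/-- `A(i,m) = (1/(2^m m!)) ∑_{j=0}^{m} (−1)^{m−j} (2j+1)^i C(m,j)`. -/
noncomputable def Acoef (i m : ℕ) : ℚ :=
  ((2 : ℚ) ^ m * m.factorial)⁻¹ *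
    ∑ j ∈ Finset.range (m + 1), (-1 : ℚ) ^ (m - j) * (2 * (j : ℚ) + 1) ^ i * m.choose j

open Finset Function
open scoped fwdDiff

private lemma fwdDiff_two_mul_add_one_pow (i : ℕ) :
    Δ_[1] (fun x : ℚ => (2*x+1)^i) =
      ∑ l ∈ Finset.range i, ((i.choose l : ℚ) * 2^(i-l)) • fun x : ℚ => (2*x+1)^l := by
  ext x
  simp only [fwdDiff, Finset.sum_apply, Pi.smul_apply, smul_eq_mul]
  have h : (2*(x+1)+1 : ℚ) = (2*x+1) + 2 := by ring
  rw [h, add_pow, Finset.sum_range_succ]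
  simp only [Nat.sub_self, pow_zero, Nat.choose_self, Nat.cast_one, mul_one,
    add_sub_cancel_right]
  exact Finset.sum_congr rfl fun l _ => by ring

private lemma fwdDiff_pow_vanish : ∀ m, ∀ i < m, (Δ_[1])^[m] (fun x : ℚ => (2*x+1)^i) = 0 := by
  intro m
  induction m with
  | zero => omega
  | succ m ih =>
    intro i hi
    rw [Function.iterate_succ_apply, fwdDiff_two_mul_add_one_pow, fwdDiff_iter_finset_sum]
    refine Finset.sum_eq_zero fun l hl => ?_
    rw [fwdDiff_iter_const_smul, ih l (by simp at hl; omega), smul_zero]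

private lemma Acoef_eq_zero {i m : ℕ} (h : i < m) : Acoef i m = 0 := by
  have h2 := fwdDiff_iter_eq_sum_shift (1:ℚ) (fun x : ℚ => (2*x+1)^i) m 0
  rw [fwdDiff_pow_vanish m i h] at h2
  unfold Acoef
  rw [mul_eq_zero]
  right
  simp only [Pi.zero_apply] at h2
  calc ∑ j ∈ Finset.range (m + 1), (-1 : ℚ) ^ (m - j) * (2 * (j : ℚ) + 1) ^ i * m.choose j
      = ∑ k ∈ range (m + 1), ((-1 : ℤ) ^ (m - k) * m.choose k) • ((2*((0:ℚ) + k • (1:ℚ))+1)^i) := by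
        refine Finset.sum_congr rfl fun k _ => ?_
        push_cast [zsmul_eq_mul, nsmul_eq_mul]
        ring
    _ = 0 := h2.symm

private lemma prod_cast_factorial (M : ℕ) : ∏ k ∈ Finset.range M, ((M:ℚ) - k) = M.factorial := by
  rw [← Finset.prod_range_reflect (fun k => (M:ℚ) - k) M]
  have h : ∀ k ∈ Finset.range M, (M:ℚ) - (↑(M - 1 - k)) = ((k+1 : ℕ) : ℚ) := by
    intro k hk
    rw [Finset.mem_range] at hk
    rw [show M - 1 - k = M - (k+1) by omega, Nat.cast_sub (by omega)]
    push_cast; ring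
  rw [Finset.prod_congr rfl h, ← Nat.cast_prod, Finset.prod_range_add_one_eq_factorial]

/-- The matrices `A(i,m)` and `P(m,i)` (the latter defined by
`∑_i P(m,i) z^i = ∏_{k=0}^{m−1} (z − (2k+1))`) are mutually inverse:
for all `n ≥ m ≥ 0`, `∑_{i=m}^{n} P(n,i) A(i,m) = δ_{n,m}`. -/
theorem P_A_inverse
    (P : ℕ → ℕ → ℚ)
    (hP : ∀ m : ℕ, ∏ k ∈ Finset.range m, (Polynomial.X - Polynomial.C (2 * (k : ℚ) + 1)) =
      ∑ i ∈ Finset.range (m + 1), Polynomial.C (P m i) * Polynomial.X ^ i) :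
    ∀ n m : ℕ, m ≤ n →
      ∑ i ∈ Finset.Icc m n, P n i * Acoef i m = if n = m then 1 else 0 := by
  intro n m hmn
  have heval : ∀ x : ℚ, ∑ i ∈ Finset.range (n+1), P n i * x ^ i =
      ∏ k ∈ Finset.range n, (x - (2*(k:ℚ)+1)) := by
    intro x
    have := congrArg (Polynomial.eval x) (hP n)
    simpa [Polynomial.eval_prod, Polynomial.eval_finset_sum] using this.symm
  have keyz : ∀ j : ℕ, j < n → (∏ k ∈ Finset.range n, (2*(j:ℚ)+1 - (2*(k:ℚ)+1))) = 0 := by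
    intro j hj
    exact Finset.prod_eq_zero (Finset.mem_range.2 hj) (by ring)
  have hext : ∑ i ∈ Finset.Icc m n, P n i * Acoef i m
      = ∑ i ∈ Finset.range (n+1), P n i * Acoef i m := by
    refine Finset.sum_subset ?_ ?_
    · intro i hi
      rw [Finset.mem_Icc] at hi
      exact Finset.mem_range.2 (by omega)
    · intro i hi hni
      rw [Finset.mem_range] at hi
      rw [Finset.mem_Icc] at hni
      rw [Acoef_eq_zero (by omega : i < m), mul_zero]
  set c : ℚ := (2 : ℚ) ^ m * m.factorial with hc
  have hc0 : c ≠ 0 := by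
    positivity
  have hswap : ∑ i ∈ Finset.range (n+1), P n i * Acoef i m
      = ∑ j ∈ Finset.range (m+1), c⁻¹ * ((-1:ℚ)^(m-j) * m.choose j) *
          ∑ i ∈ Finset.range (n+1), P n i * (2*(j:ℚ)+1)^i := by
    simp only [Acoef, Finset.mul_sum, Finset.sum_mul, ← hc]
    rw [Finset.sum_comm]
    exact Finset.sum_congr rfl fun j _ => Finset.sum_congr rfl fun i _ => by ring
  rw [hext, hswap]
  by_cases hn : n = m
  · subst hn
    rw [Finset.sum_range_succ, if_pos rfl]
    have hz : ∑ j ∈ Finset.range n, c⁻¹ * ((-1:ℚ)^(n-j) * n.choose j) *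
        ∑ i ∈ Finset.range (n+1), P n i * (2*(j:ℚ)+1)^i = 0 := by
      refine Finset.sum_eq_zero fun j hj => ?_
      rw [heval, keyz j (Finset.mem_range.1 hj), mul_zero]
    rw [hz, zero_add, heval]
    have hprod : ∏ k ∈ Finset.range n, (2*(n:ℚ)+1 - (2*(k:ℚ)+1)) = c := by
      have : ∀ k ∈ Finset.range n, (2*(n:ℚ)+1 - (2*(k:ℚ)+1)) = 2 * ((n:ℚ) - k) := by
        intro k _; ring
      rw [Finset.prod_congr rfl this, Finset.prod_mul_distrib, Finset.prod_const,
        prod_cast_factorial, Finset.card_range, hc]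
    rw [hprod, Nat.sub_self, pow_zero, one_mul, Nat.choose_self, Nat.cast_one, mul_one,
      inv_mul_cancel₀ hc0]
  · rw [if_neg hn]
    refine Finset.sum_eq_zero fun j hj => ?_
    rw [Finset.mem_range] at hj
    rw [heval, keyz j (by omega), mul_zero]
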